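/- If n is odd and A is an n-by-n absolutely flat idempotent with constant 1/k and rank r, then r = 1 and k is odd. -/

import Mathlib

theorem stmt_5 (n k : ℕ) (hk : 0 < k) (hn : Odd n)
    (A : Matrix (Fin n) (Fin n) ℝ)
    (hidem : A * A = A)
    (hpm : ∀ i j, A i j = 1 / k ∨ A i j = -(1 / k)) :
    A.rank = 1 ∧ Odd k := by
  have hk0 : (k : ℝ) ≠ 0 := Nat.cast_ne_zero.mpr hk.ne'
  have hn0 : 0 < n := by
    rcases hn with ⟨m, hm⟩; omega
  -- the sign matrix
  set ε : Fin n → Fin n → ℤ := fun i j => if A i j = 1 / k then 1 else -1 with hεdef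
  have hkpos : (0 : ℝ) < k := by positivity
  have hinvpos : (0 : ℝ) < 1 / k := by positivity
  have hεpm : ∀ i j, ε i j = 1 ∨ ε i j = -1 := by
    intro i j
    by_cases h : A i j = 1 / k
    · left; exact if_pos h
    · right; exact if_neg h
  have hε' : ∀ i j, (ε i j : ℝ) = k * A i j := by
    intro i j
    rcases hpm i j with h | h
    · have : ε i j = 1 := if_pos h
      rw [this, h]
      push_cast
      field_simp
    · have hne : A i j ≠ 1 / k := by
        rw [h]
        intro hc
        linarith
      have : ε i j = -1 := if_neg hne
      rw [this, h]
      push_cast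
      field_simp
  -- key identity over ℤ
  have key : ∀ i j, ∑ l, ε i l * ε l j = (k : ℤ) * ε i j := by
    intro i j
    have h : ∑ l, A i l * A l j = A i j := by
      have := congrFun (congrFun hidem i) j
      rwa [Matrix.mul_apply] at this
    have hr : (∑ l, (ε i l : ℝ) * (ε l j : ℝ)) = (k : ℝ) * (ε i j : ℝ) := by
      calc (∑ l, (ε i l : ℝ) * (ε l j : ℝ))
          = ∑ l, ((k : ℝ) * A i l) * ((k : ℝ) * A l j) := by
            apply Finset.sum_congr rfl; intro l _; rw [hε', hε']
        _ = (k : ℝ) * (k : ℝ) * ∑ l, A i l * A l j := by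
            rw [Finset.mul_sum]; apply Finset.sum_congr rfl; intro l _; ring
        _ = (k : ℝ) * ((k : ℝ) * A i j) := by rw [h]; ring
        _ = (k : ℝ) * (ε i j : ℝ) := by rw [hε']
    exact_mod_cast hr
  -- Odd k
  have i₀ : Fin n := ⟨0, hn0⟩
  have hkodd : Odd k := by
    have h := congrArg (fun z : ℤ => (z : ZMod 2)) (key i₀ i₀)
    push_cast at h
    have hterm : ∀ l : Fin n, ((ε i₀ l : ZMod 2) * (ε l i₀ : ZMod 2)) = 1 := by
      intro l
      rcases hεpm i₀ l with h1 | h1 <;> rcases hεpm l i₀ with h2 | h2 <;>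
        simp [h1, h2] <;> decide
    rw [Finset.sum_congr rfl (fun l _ => hterm l)] at h
    simp only [Finset.sum_const, Finset.card_univ, Fintype.card_fin, nsmul_eq_mul, mul_one] at h
    have hεcast : ((ε i₀ i₀ : ℤ) : ZMod 2) = 1 := by
      rcases hεpm i₀ i₀ with h1 | h1 <;> simp [h1] <;> decide
    rw [hεcast, mul_one] at h
    -- h : (n : ZMod 2) = (k : ZMod 2)
    have hn2 : ((n : ℕ) : ZMod 2) = 1 := by
      obtain ⟨m, hm⟩ := hn
      have hmod : n % 2 = 1 := by omega
      rw [← ZMod.natCast_mod, hmod, Nat.cast_one]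
    rw [hn2] at h
    rw [Nat.odd_iff]
    rcases Nat.mod_two_eq_zero_or_one k with h2 | h2
    · exfalso
      rw [← ZMod.natCast_mod k 2, h2] at h
      exact one_ne_zero (h.trans Nat.cast_zero)
    · exact h2
  refine ⟨?_, hkodd⟩
  -- column dichotomy
  have hcol : ∀ j, (∀ i, ε i j = ε i i₀) ∨ (∀ i, ε i j = -ε i i₀) := by
    intro j
    by_contra hcon
    push_neg at hcon
    obtain ⟨⟨i₁, hi₁⟩, ⟨i₂, hi₂⟩⟩ := hcon
    -- i₂ : ε i₂ j = ε i₂ i₀ ; i₁ : ε i₁ j = -ε i₁ i₀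
    have hi₁' : ε i₁ j = -ε i₁ i₀ := by
      rcases hεpm i₁ j with h1 | h1 <;> rcases hεpm i₁ i₀ with h2 | h2 <;>
        simp [h1, h2] at hi₁ ⊢ <;> omega
    have hi₂' : ε i₂ j = ε i₂ i₀ := by
      rcases hεpm i₂ j with h1 | h1 <;> rcases hεpm i₂ i₀ with h2 | h2 <;>
        simp [h1, h2] at hi₂ ⊢ <;> omega
    have S2 : ∑ l, ε i₂ l * (ε l j - ε l i₀) = 0 := by
      have := key i₂ j
      have h2 := key i₂ i₀
      calc ∑ l, ε i₂ l * (ε l j - ε l i₀)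
          = (∑ l, ε i₂ l * ε l j) - ∑ l, ε i₂ l * ε l i₀ := by
            rw [← Finset.sum_sub_distrib]; apply Finset.sum_congr rfl; intro l _; ring
        _ = (k : ℤ) * ε i₂ j - (k : ℤ) * ε i₂ i₀ := by rw [this, h2]
        _ = 0 := by rw [hi₂']; ring
    have S1 : ∑ l, ε i₁ l * (ε l j + ε l i₀) = 0 := by
      have := key i₁ j
      have h2 := key i₁ i₀
      calc ∑ l, ε i₁ l * (ε l j + ε l i₀)
          = (∑ l, ε i₁ l * ε l j) + ∑ l, ε i₁ l * ε l i₀ := by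
            rw [← Finset.sum_add_distrib]; apply Finset.sum_congr rfl; intro l _; ring
        _ = (k : ℤ) * ε i₁ j + (k : ℤ) * ε i₁ i₀ := by rw [this, h2]
        _ = 0 := by rw [hi₁']; ring
    have Stot : ∑ l, (ε i₂ l * (ε l j - ε l i₀) + ε i₁ l * (ε l j + ε l i₀)) = 0 := by
      rw [Finset.sum_add_distrib, S1, S2]
      norm_num
    have hterm : ∀ l : Fin n,
        ε i₂ l * (ε l j - ε l i₀) + ε i₁ l * (ε l j + ε l i₀) = 2 ∨
        ε i₂ l * (ε l j - ε l i₀) + ε i₁ l * (ε l j + ε l i₀) = -2 := by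
      intro l
      rcases hεpm i₂ l with h1 | h1 <;> rcases hεpm i₁ l with h2 | h2 <;>
        rcases hεpm l j with h3 | h3 <;> rcases hεpm l i₀ with h4 | h4 <;>
        rw [h1, h2, h3, h4] <;> norm_num
    -- cast to ZMod 4
    have h4 := congrArg (fun z : ℤ => (z : ZMod 4)) Stot
    push_cast at h4
    have hterm4 : ∀ l : Fin n,
        ((ε i₂ l : ZMod 4) * ((ε l j : ZMod 4) - (ε l i₀ : ZMod 4)) +
          (ε i₁ l : ZMod 4) * ((ε l j : ZMod 4) + (ε l i₀ : ZMod 4))) = 2 := by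
      intro l
      rcases hterm l with h | h
      · have := congrArg (fun z : ℤ => (z : ZMod 4)) h
        push_cast at this
        rw [this]
      · have := congrArg (fun z : ℤ => (z : ZMod 4)) h
        push_cast at this
        rw [this]
        decide
    rw [Finset.sum_congr rfl (fun l _ => hterm4 l)] at h4
    simp only [Finset.sum_const, Finset.card_univ, Fintype.card_fin, nsmul_eq_mul] at h4
    -- h4 : (n : ZMod 4) * 2 = 0
    rcases hn with ⟨m, hm⟩
    subst hm
    push_cast at h4
    have h5 : ((2 : ZMod 4) * (m : ℕ) + 1) * 2 = 2 := by
      calc ((2 : ZMod 4) * (m : ℕ) + 1) * 2 = 4 * (m : ℕ) + 2 := by ring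
        _ = 0 * (m : ℕ) + 2 := by rw [show (4 : ZMod 4) = 0 by decide]
        _ = 2 := by ring
    rw [h5] at h4
    exact (show (2 : ZMod 4) ≠ 0 by decide) h4
  have hA : ∀ a b, A a b = (ε a b : ℝ) / k := by
    intro a b
    rw [hε' a b]
    field_simp
  have hAcol : ∀ j, (∀ i, A i j = A i i₀) ∨ (∀ i, A i j = -A i i₀) := by
    intro j
    rcases hcol j with h | h
    · left; intro i; rw [hA, hA, h i]
    · right; intro i; rw [hA, hA, h i]; push_cast; ring
  have hA0 : ∀ i, A i i₀ ≠ 0 := by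
    intro i
    rcases hpm i i₀ with h | h <;> rw [h] <;>
      simp [hk0]
  classical
  set s : Fin n → ℝ := fun j => if ∀ i, A i j = A i i₀ then 1 else -1 with hsdef
  have hfac : A = Matrix.replicateCol (Fin 1) (fun i => A i i₀) * Matrix.replicateRow (Fin 1) s := by
    ext i j
    rw [Matrix.mul_apply]
    simp only [Matrix.replicateCol_apply, Matrix.replicateRow_apply, Finset.sum_const, Finset.card_univ,
      Fintype.card_fin, one_smul]
    by_cases h : ∀ i', A i' j = A i' i₀
    · have hs1 : s j = 1 := if_pos h
      rw [hs1, h i]; ring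
    · have hs1 : s j = -1 := if_neg h
      have h' : ∀ i', A i' j = -A i' i₀ := by
        rcases hAcol j with hc | hc
        · exact absurd hc h
        · exact hc
      rw [hs1, h' i]; ring
  have hrank_le : A.rank ≤ 1 := by
    rw [hfac]
    calc (Matrix.replicateCol (Fin 1) (fun i => A i i₀) * Matrix.replicateRow (Fin 1) s).rank
        ≤ (Matrix.replicateCol (Fin 1) (fun i => A i i₀)).rank := Matrix.rank_mul_le_left _ _
      _ ≤ Fintype.card (Fin 1) := Matrix.rank_le_card_width _
      _ = 1 := by simp
  have hrank_pos : 0 < A.rank := by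
    rw [Matrix.rank]
    rw [Module.finrank_pos_iff_exists_ne_zero]
    refine ⟨⟨A.mulVecLin (Pi.single i₀ 1), ⟨Pi.single i₀ 1, rfl⟩⟩, ?_⟩
    intro hc
    have : A.mulVecLin (Pi.single i₀ 1) = 0 := by
      have := congrArg (Subtype.val) hc
      exact this
    have h2 := congrFun this i₀
    rw [Matrix.mulVecLin_apply, Matrix.mulVec_single_one] at h2
    simp only [mul_one, Pi.zero_apply, Matrix.col_apply] at h2
    rcases hpm i₀ i₀ with h | h <;> rw [h] at h2 <;> simp [hk0] at h2
  omega
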